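/- arXiv:2206.00270 — 2 statements merged into one kernel-verified Lean document; each statement's English description precedes it below -/
import Mathlib

section
/- Let A and B be positive definite d×d matrices with A - B positive semidefinite. Then for every nonzero vector x, (xᵀAx)/(xᵀBx) ≤ det(A)/det(B) and likewise (xᵀB⁻¹x)/(xᵀA⁻¹x) ≤ det(A)/det(B). -/
open Matrix

lemma aux_eig_ge_one {d : ℕ} {M : Matrix (Fin d) (Fin d) ℝ} (hM : M.IsHermitian)
    (h1 : (M - 1).PosSemidef) (i : Fin d) : 1 ≤ hM.eigenvalues i := by
  set v : Fin d → ℝ := ⇑(hM.eigenvectorBasis i) with hv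
  have hvne : v ≠ 0 := by
    intro h
    apply hM.eigenvectorBasis.orthonormal.ne_zero i
    ext j
    exact congrFun h j
  have hvv : 0 < v ⬝ᵥ v := by
    simpa using dotProduct_star_self_pos_iff (v := v).mpr hvne
  have hMe : M *ᵥ v = hM.eigenvalues i • v := hM.mulVec_eigenvectorBasis i
  have h0 := h1.dotProduct_mulVec_nonneg v
  rw [sub_mulVec, dotProduct_sub, one_mulVec, hMe] at h0
  simp only [star_trivial, dotProduct_smul, smul_eq_mul] at h0
  nlinarith

lemma aux_conj {d : ℕ} {M : Matrix (Fin d) (Fin d) ℝ} (hM : M.IsHermitian)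
    (hge : ∀ i, 1 ≤ hM.eigenvalues i) :
    (M.det • (1 : Matrix (Fin d) (Fin d) ℝ) - M).PosSemidef ∧
    (1 - M⁻¹).PosSemidef := by
  set μ := hM.eigenvalues with hμ
  set U : Matrix (Fin d) (Fin d) ℝ := (hM.eigenvectorUnitary : Matrix (Fin d) (Fin d) ℝ) with hU
  have hUU : U * star U = 1 := (Matrix.mem_unitaryGroup_iff).mp hM.eigenvectorUnitary.2
  have hUU' : star U * U = 1 := (Matrix.mem_unitaryGroup_iff').mp hM.eigenvectorUnitary.2
  have hspec : M = U * diagonal μ * star U := by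
    simpa using hM.spectral_theorem
  have hdet : M.det = ∏ i, μ i := by simpa using hM.det_eq_prod_eigenvalues
  have hdetge : ∀ i, μ i ≤ M.det := by
    intro i
    rw [hdet]
    have hone : (1:ℝ) ≤ ∏ j ∈ Finset.univ.erase i, μ j := by
      calc (1:ℝ) = ∏ _j ∈ Finset.univ.erase i, (1:ℝ) := by simp
        _ ≤ ∏ j ∈ Finset.univ.erase i, μ j :=
            Finset.prod_le_prod (fun j _ => by norm_num) (fun j _ => hge j)
    have hsplit := Finset.mul_prod_erase Finset.univ μ (Finset.mem_univ i)
    nlinarith [hge i]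
  have hconj : ∀ f : Fin d → ℝ, (∀ i, 0 ≤ f i) → (U * diagonal f * star U).PosSemidef := by
    intro f hf
    have := (posSemidef_diagonal_iff.mpr hf).mul_mul_conjTranspose_same U
    simpa [Matrix.star_eq_conjTranspose] using this
  have hne : ∀ i, μ i ≠ 0 := fun i => by linarith [hge i]
  constructor
  · have he : M.det • (1 : Matrix (Fin d) (Fin d) ℝ) - M
        = U * diagonal (fun i => M.det - μ i) * star U := by
      have hs : M.det • (1 : Matrix (Fin d) (Fin d) ℝ) = diagonal (fun _ => M.det) := by
        ext a b
        by_cases h : a = b <;> simp [h]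
      have : (diagonal (fun i => M.det - μ i) : Matrix (Fin d) (Fin d) ℝ)
          = M.det • 1 - diagonal μ := by
        rw [hs, ← diagonal_sub]
      rw [this, Matrix.mul_sub, Matrix.sub_mul, ← hspec]
      congr 1
      rw [Matrix.mul_smul, Matrix.smul_mul, mul_one, hUU]
    rw [he]
    exact hconj _ (fun i => by linarith [hdetge i])
  · have hMinv : M⁻¹ = U * diagonal (fun i => (μ i)⁻¹) * star U := by
      apply Matrix.inv_eq_right_inv
      rw [hspec]
      calc U * diagonal μ * star U * (U * diagonal (fun i => (μ i)⁻¹) * star U)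
          = U * (diagonal μ * (star U * U) * diagonal (fun i => (μ i)⁻¹)) * star U := by
            noncomm_ring
        _ = 1 := by
            rw [hUU', mul_one, diagonal_mul_diagonal]
            have : (fun i => μ i * (μ i)⁻¹) = fun _ => (1:ℝ) := by
              funext i; exact mul_inv_cancel₀ (hne i)
            rw [this, diagonal_one, mul_one, hUU]
    have he : (1 : Matrix (Fin d) (Fin d) ℝ) - M⁻¹
        = U * diagonal (fun i => 1 - (μ i)⁻¹) * star U := by
      have : (diagonal (fun i => 1 - (μ i)⁻¹) : Matrix (Fin d) (Fin d) ℝ)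
          = 1 - diagonal (fun i => (μ i)⁻¹) := by
        rw [← diagonal_one, ← diagonal_sub]
      rw [this, Matrix.mul_sub, Matrix.sub_mul, ← hMinv, mul_one, hUU]
    rw [he]
    refine hconj _ (fun i => ?_)
    have h1 : (μ i)⁻¹ ≤ 1 := by
      rw [inv_le_one_iff₀]; right; exact hge i
    linarith

lemma aux_main {d : ℕ} {A B : Matrix (Fin d) (Fin d) ℝ}
    (hA : A.PosDef) (hB : B.PosDef) (hAB : (A - B).PosSemidef) :
    ((A.det / B.det) • B - A).PosSemidef ∧ (B⁻¹ - A⁻¹).PosSemidef := by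
  set S := (open scoped MatrixOrder in CFC.sqrt B) with hSdef
  have hS2 : S * S = B := by
    open scoped MatrixOrder in exact CFC.sqrt_mul_sqrt_self B hB.posSemidef.nonneg
  have hSH : S.IsHermitian := by
    open scoped MatrixOrder in exact (CFC.sqrt_nonneg B).posSemidef.1
  have hdetS : S.det * S.det = B.det := by rw [← det_mul, hS2]
  have hdetB : 0 < B.det := hB.det_pos
  have hdetSne : S.det ≠ 0 := by
    intro h; rw [h, mul_zero] at hdetS; exact hdetB.ne' hdetS.symm
  have hSunit : IsUnit S.det := hdetSne.isUnit
  set T := S⁻¹ with hTdef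
  have hST : S * T = 1 := mul_nonsing_inv _ hSunit
  have hTS : T * S = 1 := nonsing_inv_mul _ hSunit
  have hTH : T.IsHermitian := hSH.inv
  set M := T * A * T with hMdef
  have hMH : M.IsHermitian := by
    show Mᴴ = M
    rw [hMdef, conjTranspose_mul, conjTranspose_mul, hTH.eq, hA.1.eq, Matrix.mul_assoc]
  have hTBT : T * B * T = 1 := by
    rw [← hS2, ← Matrix.mul_assoc, Matrix.mul_assoc (T * S), hST, Matrix.mul_one, hTS]
  have hSMS : S * M * S = A := by
    rw [hMdef, ← Matrix.mul_assoc, ← Matrix.mul_assoc, hST, Matrix.one_mul,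
      Matrix.mul_assoc, hTS, Matrix.mul_one]
  have hM1 : (M - 1).PosSemidef := by
    have he : M - 1 = T * (A - B) * Tᴴ := by
      rw [hTH.eq, Matrix.mul_sub, Matrix.sub_mul, hTBT, hMdef]
    rw [he]
    exact hAB.mul_mul_conjTranspose_same T
  have hge : ∀ i, 1 ≤ hMH.eigenvalues i := aux_eig_ge_one hMH hM1
  obtain ⟨h1, h2⟩ := aux_conj hMH hge
  have hdetT : T.det = (S.det)⁻¹ := by
    rw [hTdef, Matrix.det_nonsing_inv, Ring.inverse_eq_inv']
  have hdetM : M.det = A.det / B.det := by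
    rw [hMdef, det_mul, det_mul, hdetT, ← hdetS]
    field_simp
  constructor
  · have he : (A.det / B.det) • B - A = S * (M.det • (1 : Matrix (Fin d) (Fin d) ℝ) - M) * Sᴴ := by
      rw [hSH.eq, Matrix.mul_sub, Matrix.sub_mul, hSMS, Matrix.mul_smul, Matrix.smul_mul,
        Matrix.mul_one, hS2, hdetM]
    rw [he]
    exact h1.mul_mul_conjTranspose_same S
  · have hSinv : T⁻¹ = S := nonsing_inv_nonsing_inv _ hSunit
    have hMinv : M⁻¹ = S * A⁻¹ * S := by
      rw [hMdef, Matrix.mul_inv_rev, Matrix.mul_inv_rev, hSinv, Matrix.mul_assoc]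
    have hBinv : B⁻¹ = T * T := by rw [← hS2, Matrix.mul_inv_rev]
    have hTMT : T * M⁻¹ * T = A⁻¹ := by
      rw [hMinv, ← Matrix.mul_assoc, ← Matrix.mul_assoc, hTS, Matrix.one_mul,
        Matrix.mul_assoc, hST, Matrix.mul_one]
    have he : B⁻¹ - A⁻¹ = T * ((1 : Matrix (Fin d) (Fin d) ℝ) - M⁻¹) * Tᴴ := by
      rw [hTH.eq, Matrix.mul_sub, Matrix.sub_mul, hTMT, Matrix.mul_one, hBinv]
    rw [he]
    exact h2.mul_mul_conjTranspose_same T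

theorem stmt_1 {d : ℕ} (A B : Matrix (Fin d) (Fin d) ℝ)
    (hA : A.PosDef) (hB : B.PosDef) (hAB : (A - B).PosSemidef)
    (x : Fin d → ℝ) (hx : x ≠ 0) :
    (x ⬝ᵥ A.mulVec x) / (x ⬝ᵥ B.mulVec x) ≤ A.det / B.det ∧
    (x ⬝ᵥ B⁻¹.mulVec x) / (x ⬝ᵥ A⁻¹.mulVec x) ≤ A.det / B.det := by
  obtain ⟨h1, h2⟩ := aux_main hA hB hAB
  have hdet : B⁻¹.det / A⁻¹.det = A.det / B.det := by
    rw [Matrix.det_nonsing_inv, Matrix.det_nonsing_inv]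
    simp [Ring.inverse_eq_inv', inv_div_inv]
    ring
  have key2 := (aux_main hB.inv hA.inv h2).1
  constructor
  · have hBx : 0 < x ⬝ᵥ B.mulVec x := by simpa using hB.dotProduct_mulVec_pos hx
    rw [div_le_iff₀ hBx]
    have := h1.dotProduct_mulVec_nonneg x
    rw [sub_mulVec, dotProduct_sub, smul_mulVec, dotProduct_smul] at this
    simp only [star_trivial, smul_eq_mul] at this
    linarith
  · have hAx : 0 < x ⬝ᵥ A⁻¹.mulVec x := by simpa using hA.inv.dotProduct_mulVec_pos hx
    rw [div_le_iff₀ hAx]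
    have := key2.dotProduct_mulVec_nonneg x
    rw [sub_mulVec, dotProduct_sub, smul_mulVec, dotProduct_smul, hdet] at this
    simp only [star_trivial, smul_eq_mul] at this
    linarith
end

section
/- Let λ > 0 and let y_1, …, y_n ∈ R^d with ‖y_t‖ ≤ 1 for all t. Define V_1 = λI and V_{t+1} = V_t + y_t y_tᵀ. Then ∑_{t=1}^n min(‖y_t‖²_{V_t^{-1}}, 1) ≤ 2 log(det(V_{n+1})/det(V_1)), where ‖y‖²_M = yᵀ M y. -/
open Matrix Finset

private lemma telesc : ∀ {n : ℕ} (f : Fin (n+1) → ℝ) (g : Fin n → ℝ),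
    (∀ t : Fin n, f t.succ - f t.castSucc = g t) →
    ∑ t : Fin n, g t = f (Fin.last n) - f 0 := by
  intro n
  induction n with
  | zero => intro f g h; simp [Fin.last]
  | succ n ih =>
    intro f g h
    rw [Fin.sum_univ_castSucc]
    have := ih (f ∘ Fin.castSucc) (g ∘ Fin.castSucc) (fun t => by
      simp only [Function.comp]
      rw [← Fin.succ_castSucc]
      exact h t.castSucc)
    simp only [Function.comp] at this
    rw [this]
    have h2 := h (Fin.last n)
    have : (Fin.last n).succ = Fin.last (n+1) := rfl
    rw [this] at h2
    simp only [Fin.castSucc_zero] at *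
    linarith

private lemma key_ineq {m : ℝ} (h0 : 0 ≤ m) (h1 : m ≤ 1) :
    m ≤ 2 * Real.log (1 + m) := by
  have hpos : (0:ℝ) < 1 + m := by linarith
  have hexp : Real.exp (m/2) ≤ 1 + m := by
    have h3 : 1 - m/2 ≤ Real.exp (-(m/2)) := by
      have := Real.add_one_le_exp (-(m/2)); linarith
    have h4 : (0:ℝ) < 1 - m/2 := by linarith
    have h5 : Real.exp (m/2) ≤ 1 / (1 - m/2) := by
      rw [le_div_iff₀ h4]
      calc Real.exp (m/2) * (1 - m/2) ≤ Real.exp (m/2) * Real.exp (-(m/2)) := by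
            exact mul_le_mul_of_nonneg_left h3 (Real.exp_nonneg _)
        _ = 1 := by rw [← Real.exp_add]; simp
    refine h5.trans ?_
    rw [div_le_iff₀ h4]
    nlinarith
  have := Real.log_le_log (Real.exp_pos _) hexp
  rw [Real.log_exp] at this
  linarith

theorem stmt_2 {d n : ℕ} (lam : ℝ) (hlam : 0 < lam)
    (y : Fin n → (Fin d → ℝ)) (hy : ∀ t, Real.sqrt (y t ⬝ᵥ y t) ≤ 1)
    (V : Fin (n + 1) → Matrix (Fin d) (Fin d) ℝ)
    (hV0 : V 0 = lam • (1 : Matrix (Fin d) (Fin d) ℝ))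
    (hVs : ∀ t : Fin n, V t.succ = V t.castSucc + vecMulVec (y t) (y t)) :
    ∑ t : Fin n, min (y t ⬝ᵥ (V t.castSucc)⁻¹.mulVec (y t)) 1 ≤
      2 * Real.log ((V (Fin.last n)).det / (V 0).det) := by
  -- positive semidefiniteness of the rank-one updates
  have hps : ∀ t : Fin n, (vecMulVec (y t) (y t)).PosSemidef := by
    intro t
    rw [vecMulVec_eq (Fin 1)]
    have := posSemidef_conjTranspose_mul_self (replicateRow (Fin 1) (y t))
    simp only [conjTranspose_replicateRow, star_trivial] at this
    convert this <;> rfl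
  -- positive definiteness of all V t
  have hpd : ∀ t : Fin (n+1), (V t).PosDef := by
    intro t
    induction t using Fin.induction with
    | zero =>
      rw [hV0]
      have h1 : (lam • (1 : Matrix (Fin d) (Fin d) ℝ)) = diagonal (fun _ => lam) := by
        rw [smul_one_eq_diagonal]
      rw [h1]
      exact posDef_diagonal_iff.mpr (fun _ => hlam)
    | succ t ih =>
      rw [hVs t]
      exact ih.add_posSemidef (hps t)
  set q : Fin n → ℝ := fun t => y t ⬝ᵥ (V t.castSucc)⁻¹.mulVec (y t) with hq
  have hq0 : ∀ t, 0 ≤ q t := by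
    intro t
    have := ((hpd t.castSucc).inv.posSemidef).dotProduct_mulVec_nonneg (y t)
    simpa using this
  -- determinant recurrence
  have hdet : ∀ t : Fin n, (V t.succ).det = (V t.castSucc).det * (1 + q t) := by
    intro t
    have hA : IsUnit (V t.castSucc).det := (hpd t.castSucc).det_pos.ne'.isUnit
    rw [hVs t, vecMulVec_eq (Fin 1), det_add_replicateCol_mul_replicateRow hA]
    congr 1
    have : (replicateRow (Fin 1) (y t) * (V t.castSucc)⁻¹ * replicateCol (Fin 1) (y t)) =
        replicateRow (Fin 1) (y t ᵥ* (V t.castSucc)⁻¹) * replicateCol (Fin 1) (y t) := by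
      rw [replicateRow_vecMul]
    rw [this]
    refine (@det_unique ℝ _ (Fin 1) _ (fun a b => decidableEq_of_subsingleton a b) _ _).trans ?_
    simp only [Matrix.add_apply, Matrix.one_apply_eq, replicateRow_mul_replicateCol_apply]
    rw [← dotProduct_mulVec]
  have hdetpos : ∀ t : Fin (n+1), 0 < (V t).det := fun t => (hpd t).det_pos
  -- telescoping
  set F : Fin (n+1) → ℝ := fun k => Real.log ((V k).det) with hF
  have hstep : ∀ t : Fin n, F t.succ - F t.castSucc = Real.log (1 + q t) := by
    intro t
    have h1 : (0:ℝ) < 1 + q t := by have := hq0 t; linarith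
    simp only [hF]
    rw [hdet t, Real.log_mul (hdetpos t.castSucc).ne' h1.ne']
    ring
  have htel := telesc F (fun t => Real.log (1 + q t)) hstep
  have hlogdiv : Real.log ((V (Fin.last n)).det / (V 0).det) =
      F (Fin.last n) - F 0 := by
    rw [Real.log_div (hdetpos _).ne' (hdetpos _).ne']
  rw [hlogdiv, ← htel, Finset.mul_sum]
  apply Finset.sum_le_sum
  intro t _
  have hm0 : 0 ≤ min (q t) 1 := le_min (hq0 t) zero_le_one
  have hm1 : min (q t) 1 ≤ 1 := min_le_right _ _
  calc min (q t) 1 ≤ 2 * Real.log (1 + min (q t) 1) := key_ineq hm0 hm1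
    _ ≤ 2 * Real.log (1 + q t) := by
        have h1 : (0:ℝ) < 1 + min (q t) 1 := by linarith
        have h2 : 1 + min (q t) 1 ≤ 1 + q t := by
          have := min_le_left (q t) 1; linarith
        have := Real.log_le_log h1 h2
        linarith
end
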